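/- Fix a monomial order on F_2[X_1,...,X_m] and the set G = {∏_{i∈I}(X_i - 1) : I ⊆ {1,...,m}, |I| = l}. For any two subsets I, J of {1,...,m} with |I| = |J| = l, the S-polynomial S(g_I, g_J) of g_I = ∏_{i∈I}(X_i-1) and g_J = ∏_{j∈J}(X_j-1) has remainder zero on division by G; consequently G is a Groebner basis for the ideal it generates. -/

import Mathlib

set_option synthInstance.maxHeartbeats 1000000
set_option maxHeartbeats 1000000

open MvPolynomial

noncomputable def gI (m : ℕ) (I : Finset (Fin m)) : MvPolynomial (Fin m) (ZMod 2) :=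
  ∏ i ∈ I, (X i - 1)

noncomputable def XI (m : ℕ) (I : Finset (Fin m)) : MvPolynomial (Fin m) (ZMod 2) :=
  ∏ i ∈ I, X i

/-- The ideal (X₁²-1, …, Xₘ²-1). -/
noncomputable def relIdeal (m : ℕ) : Ideal (MvPolynomial (Fin m) (ZMod 2)) :=
  Ideal.span {p | ∃ i : Fin m, p = X i ^ 2 - 1}

/-- The ambient algebra A = F₂[X₁,…,Xₘ]/(X₁²-1,…,Xₘ²-1). -/
abbrev Amb (m : ℕ) := MvPolynomial (Fin m) (ZMod 2) ⧸ relIdeal m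

/-- The ideal M of A generated by the images of the Xᵢ - 1. -/
noncomputable def Mideal (m : ℕ) : Ideal (Amb m) :=
  Ideal.span {a | ∃ i : Fin m, a = Ideal.Quotient.mk (relIdeal m) (X i - 1)}

/-- Total degree of an exponent vector. -/
def expDeg {m : ℕ} (α : Fin m →₀ ℕ) : ℕ := α.sum fun _ n => n

/-- Graded lexicographic order on exponent vectors, with X₁ > X₂ > ⋯ > Xₘ :
`grlexLT α β` means α < β. -/
def grlexLT {m : ℕ} (α β : Fin m →₀ ℕ) : Prop :=
  expDeg α < expDeg β ∨
    (expDeg α = expDeg β ∧ ∃ i : Fin m, α i < β i ∧ ∀ j : Fin m, j < i → α j = β j)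

/-- `IsLM f α` : α is the leading monomial (w.r.t. grlex) of the nonzero polynomial f. -/
def IsLM {m : ℕ} (f : MvPolynomial (Fin m) (ZMod 2)) (α : Fin m →₀ ℕ) : Prop :=
  α ∈ f.support ∧ ∀ β ∈ f.support, ¬ grlexLT α β

/-- The ideal generated by the leading terms of the members of S (coefficients are 1
since we work over F₂). -/
noncomputable def ltIdeal {m : ℕ} (S : Set (MvPolynomial (Fin m) (ZMod 2))) :
    Ideal (MvPolynomial (Fin m) (ZMod 2)) :=
  Ideal.span {p | ∃ f ∈ S, ∃ α, IsLM f α ∧ p = monomial α 1}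

/-- `G` is a Groebner basis of the ideal `I` (w.r.t. the graded lexicographic order):
G ⊆ I and the leading terms of G generate the ideal of leading terms of I. -/
def IsGroebner {m : ℕ} (G : Set (MvPolynomial (Fin m) (ZMod 2)))
    (I : Ideal (MvPolynomial (Fin m) (ZMod 2))) : Prop :=
  G ⊆ ↑I ∧ ltIdeal G = ltIdeal (I : Set (MvPolynomial (Fin m) (ZMod 2)))

/-- G = {∏_{i∈I}(Xᵢ-1) : |I| = l}. -/
def Gset (m l : ℕ) : Set (MvPolynomial (Fin m) (ZMod 2)) :=
  {p | ∃ I : Finset (Fin m), I.card = l ∧ p = gI m I}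

/-- H = {X₁²-1, …, Xₘ²-1}. -/
def Hset (m : ℕ) : Set (MvPolynomial (Fin m) (ZMod 2)) :=
  {p | ∃ i : Fin m, p = X i ^ 2 - 1}

/-! ### Auxiliary definitions and lemmas -/

lemma expDeg_add {m : ℕ} (a b : Fin m →₀ ℕ) : expDeg (a + b) = expDeg a + expDeg b :=
  Finsupp.sum_add_index' (fun _ => rfl) (fun _ _ _ => rfl)

lemma expDeg_single {m : ℕ} (a : Fin m) (n : ℕ) : expDeg (Finsupp.single a n) = n := by
  simp [expDeg]

lemma grlexLT_irrefl {m : ℕ} (α : Fin m →₀ ℕ) : ¬ grlexLT α α := by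
  rintro (h | ⟨-, i, hi, -⟩)
  · exact lt_irrefl _ h
  · exact lt_irrefl _ hi

noncomputable def phi (m : ℕ) :
    MvPolynomial (Fin m) (ZMod 2) →ₐ[ZMod 2] MvPolynomial (Fin m) (ZMod 2) :=
  aeval (fun i => X i + 1)

lemma two_eq_zero (m : ℕ) : (1 + 1 : MvPolynomial (Fin m) (ZMod 2)) = 0 := by
  rw [← C_1, ← C_add]
  have : (1 + 1 : ZMod 2) = 0 := by decide
  rw [this, C_0]

lemma phi_X (m : ℕ) (i : Fin m) : phi m (X i) = X i + 1 := by simp [phi]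

lemma phi_phi (m : ℕ) (f : MvPolynomial (Fin m) (ZMod 2)) : phi m (phi m f) = f := by
  have h : (phi m).comp (phi m) = AlgHom.id _ _ := by
    apply MvPolynomial.algHom_ext
    intro i
    simp [phi, add_assoc, two_eq_zero m]
  simpa using DFunLike.congr_fun h f

lemma pow_aux (m : ℕ) (a : Fin m) (n : ℕ) : ∃ s : MvPolynomial (Fin m) (ZMod 2),
    (X a + 1) ^ n = X a ^ n + s ∧ ∀ γ ∈ s.support, expDeg γ < n := by
  classical
  induction n with
  | zero => exact ⟨0, by simp, by simp⟩
  | succ n ih =>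
    obtain ⟨s, hs, hdeg⟩ := ih
    refine ⟨X a ^ n + X a * s + s, by rw [pow_succ, hs]; ring, ?_⟩
    intro γ hγ
    rcases Finset.mem_union.mp (MvPolynomial.support_add hγ) with h | h
    · rcases Finset.mem_union.mp (MvPolynomial.support_add h) with h2 | h2
      · rw [X_pow_eq_monomial, support_monomial, if_neg (one_ne_zero)] at h2
        rw [Finset.mem_singleton] at h2
        subst h2
        rw [expDeg_single]
        omega
      · obtain ⟨y, hy, z, hz, hyz⟩ := Finset.mem_add.mp (MvPolynomial.support_mul _ _ h2)
        rw [MvPolynomial.support_X, Finset.mem_singleton] at hy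
        subst hy
        have := hdeg z hz
        rw [← hyz, expDeg_add, expDeg_single]
        omega
    · exact lt_trans (hdeg γ h) (Nat.lt_succ_self n)

lemma phi_monomial (m : ℕ) (β : Fin m →₀ ℕ) : ∃ r : MvPolynomial (Fin m) (ZMod 2),
    phi m (monomial β 1) = monomial β 1 + r ∧ ∀ γ ∈ r.support, expDeg γ < expDeg β := by
  classical
  induction β using Finsupp.induction with
  | zero => exact ⟨0, by simp, by simp⟩
  | single_add a n f ha hn ih =>
    obtain ⟨r, hr, hrdeg⟩ := ih
    obtain ⟨s, hs, hsdeg⟩ := pow_aux m a n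
    have hsplit : (monomial (Finsupp.single a n + f) (1 : ZMod 2)) = X a ^ n * monomial f 1 := by
      rw [X_pow_eq_monomial, monomial_mul, one_mul]
    refine ⟨X a ^ n * r + s * monomial f 1 + s * r, ?_, ?_⟩
    · rw [hsplit, map_mul, hr]
      have : phi m (X a ^ n) = (X a + 1) ^ n := by rw [map_pow, phi_X]
      rw [this, hs]
      ring
    · have hdegβ : expDeg (Finsupp.single a n + f) = n + expDeg f := by
        rw [expDeg_add, expDeg_single]
      intro γ hγ
      rw [hdegβ]
      rcases Finset.mem_union.mp (MvPolynomial.support_add hγ) with h | h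
      · rcases Finset.mem_union.mp (MvPolynomial.support_add h) with h2 | h2
        · obtain ⟨y, hy, z, hz, hyz⟩ := Finset.mem_add.mp (MvPolynomial.support_mul _ _ h2)
          rw [X_pow_eq_monomial, support_monomial, if_neg (one_ne_zero),
            Finset.mem_singleton] at hy
          subst hy
          have := hrdeg z hz
          rw [← hyz, expDeg_add, expDeg_single]
          omega
        · obtain ⟨y, hy, z, hz, hyz⟩ := Finset.mem_add.mp (MvPolynomial.support_mul _ _ h2)
          rw [support_monomial, if_neg (one_ne_zero), Finset.mem_singleton] at hz
          subst hz
          have := hsdeg y hy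
          rw [← hyz, expDeg_add]
          omega
      · obtain ⟨y, hy, z, hz, hyz⟩ := Finset.mem_add.mp (MvPolynomial.support_mul _ _ h)
        have h1 := hsdeg y hy
        have h2 := hrdeg z hz
        rw [← hyz, expDeg_add]
        omega

lemma phi_lower (m : ℕ) (f : MvPolynomial (Fin m) (ZMod 2)) :
    ∃ R : MvPolynomial (Fin m) (ZMod 2), phi m f = f + R ∧
      ∀ γ ∈ R.support, ∃ β ∈ f.support, expDeg γ < expDeg β := by
  classical
  refine ⟨∑ β ∈ f.support, C (coeff β f) * (phi_monomial m β).choose, ?_, ?_⟩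
  · have key : ∀ β ∈ f.support, phi m (monomial β (coeff β f)) =
        monomial β (coeff β f) + C (coeff β f) * (phi_monomial m β).choose := by
      intro β _
      rw [show (monomial β) (coeff β f) = C (coeff β f) * monomial β 1 by
        rw [C_mul_monomial, mul_one], map_mul,
        show phi m (C (coeff β f)) = C (coeff β f) from algHom_C _ _]
      conv_lhs => rw [(phi_monomial m β).choose_spec.1]
      rw [mul_add, C_mul_monomial, mul_one]
    conv_lhs => rw [MvPolynomial.as_sum f]
    rw [map_sum, Finset.sum_congr rfl key, Finset.sum_add_distrib]
    congr 1
    exact (MvPolynomial.as_sum f).symm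
  · intro γ hγ
    obtain ⟨β, hβ, hγ2⟩ := Finset.mem_biUnion.mp (MvPolynomial.support_sum hγ)
    refine ⟨β, hβ, ?_⟩
    have : γ ∈ ((phi_monomial m β).choose).support := by
      have := MvPolynomial.C_mul' (a := coeff β f) (p := (phi_monomial m β).choose)
      rw [this] at hγ2
      exact Finsupp.support_smul hγ2
    exact (phi_monomial m β).choose_spec.2 γ this

lemma IsLM_phi {m : ℕ} {f : MvPolynomial (Fin m) (ZMod 2)} {α : Fin m →₀ ℕ}
    (h : IsLM f α) : IsLM (phi m f) α := by
  obtain ⟨hmem, hmax⟩ := h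
  obtain ⟨R, hR, hRdeg⟩ := phi_lower m f
  have hdegmax : ∀ β ∈ f.support, expDeg β ≤ expDeg α := by
    intro β hβ
    by_contra hc
    exact hmax β hβ (Or.inl (not_le.mp hc))
  have hαR : α ∉ R.support := by
    intro hα
    obtain ⟨β, hβ, hlt⟩ := hRdeg α hα
    exact absurd (hdegmax β hβ) (not_le.mpr hlt)
  constructor
  · rw [hR, MvPolynomial.mem_support_iff, coeff_add,
      MvPolynomial.notMem_support_iff.mp hαR, add_zero]
    exact MvPolynomial.mem_support_iff.mp hmem
  · intro γ hγ
    rw [hR] at hγ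
    rcases Finset.mem_union.mp (MvPolynomial.support_add hγ) with h | h
    · exact hmax γ h
    · obtain ⟨β, hβ, hlt⟩ := hRdeg γ h
      have hγα : expDeg γ < expDeg α := lt_of_lt_of_le hlt (hdegmax β hβ)
      rintro (hc | ⟨hc, -⟩)
      · omega
      · omega

/-- Indicator exponent vector of a finite set of variables. -/
noncomputable def ind {m : ℕ} (I : Finset (Fin m)) : Fin m →₀ ℕ :=
  ∑ i ∈ I, Finsupp.single i 1

lemma ind_apply {m : ℕ} (I : Finset (Fin m)) (j : Fin m) :
    ind I j = if j ∈ I then 1 else 0 := by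
  classical
  rw [ind, Finset.sum_apply']
  simp [Finsupp.single_apply, Finset.sum_ite_eq I j (fun _ => 1)]

lemma ind_support {m : ℕ} (I : Finset (Fin m)) : (ind I).support = I := by
  classical
  ext j
  rw [Finsupp.mem_support_iff, ind_apply]
  split <;> simp_all

lemma ind_le {m : ℕ} {I : Finset (Fin m)} {α : Fin m →₀ ℕ} (h : I ⊆ α.support) :
    ind I ≤ α := by
  rw [Finsupp.le_def]
  intro i
  rw [ind_apply]
  split
  · next hi => exact Nat.one_le_iff_ne_zero.mpr (Finsupp.mem_support_iff.mp (h hi))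
  · exact Nat.zero_le _

lemma XI_eq_monomial (m : ℕ) (I : Finset (Fin m)) : XI m I = monomial (ind I) 1 := by
  classical
  induction I using Finset.induction with
  | empty => simp [XI, ind]
  | @insert a s ha ih =>
    have hx : (X a : MvPolynomial (Fin m) (ZMod 2)) = monomial (Finsupp.single a 1) 1 := by
      rw [← pow_one (X a), X_pow_eq_monomial]
    have hsum : ind (insert a s) = Finsupp.single a 1 + ind s := Finset.sum_insert ha
    rw [XI, Finset.prod_insert ha, ← XI, ih, hx, monomial_mul, one_mul, hsum]

lemma gI_eq_phi (m : ℕ) (I : Finset (Fin m)) : gI m I = phi m (monomial (ind I) 1) := by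
  rw [← XI_eq_monomial, XI, map_prod]
  unfold gI
  apply Finset.prod_congr rfl
  intro i _
  rw [phi_X]
  have h1 : (-1 : MvPolynomial (Fin m) (ZMod 2)) = 1 :=
    neg_eq_of_add_eq_zero_left (two_eq_zero m)
  rw [sub_eq_add_neg, h1]

/-- The set of squarefree monomials with `l` variables. -/
def Sset (m l : ℕ) : Set (MvPolynomial (Fin m) (ZMod 2)) :=
  {p | ∃ I : Finset (Fin m), I.card = l ∧ p = monomial (ind I) 1}

/-- The ideal of polynomials all of whose monomials involve at least `l` variables. -/
noncomputable def bigIdeal (m l : ℕ) : Ideal (MvPolynomial (Fin m) (ZMod 2)) where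
  carrier := {f | ∀ β ∈ f.support, l ≤ β.support.card}
  zero_mem' := by simp
  add_mem' := by
    intro a b ha hb β hβ
    rcases Finset.mem_union.mp (MvPolynomial.support_add hβ) with h | h
    · exact ha β h
    · exact hb β h
  smul_mem' := by
    intro c x hx β hβ
    rw [smul_eq_mul] at hβ
    obtain ⟨y, hy, z, hz, hyz⟩ := Finset.mem_add.mp (MvPolynomial.support_mul _ _ hβ)
    have hsub : z.support ⊆ β.support := by
      intro i hi
      rw [Finsupp.mem_support_iff] at hi ⊢
      rw [← hyz]
      simp only [Finsupp.add_apply]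
      omega
    exact le_trans (hx z hz) (Finset.card_le_card hsub)

lemma span_Sset_le (m l : ℕ) : Ideal.span (Sset m l) ≤ bigIdeal m l := by
  rw [Ideal.span_le]
  rintro p ⟨I, hI, rfl⟩
  show ∀ β ∈ (monomial (ind I) (1 : ZMod 2)).support, l ≤ β.support.card
  intro β hβ
  rw [support_monomial, if_neg one_ne_zero, Finset.mem_singleton] at hβ
  subst hβ
  rw [ind_support, hI]

lemma spanG_to_spanS (m l : ℕ) {f : MvPolynomial (Fin m) (ZMod 2)}
    (hf : f ∈ Ideal.span (Gset m l)) : phi m f ∈ Ideal.span (Sset m l) := by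
  refine Submodule.span_induction ?_ ?_ ?_ ?_ hf
  · rintro x ⟨I, hI, rfl⟩
    rw [gI_eq_phi, phi_phi]
    exact Ideal.subset_span ⟨I, hI, rfl⟩
  · simp
  · intro x y _ _ hx hy
    rw [map_add]
    exact Ideal.add_mem _ hx hy
  · intro a x _ hx
    rw [smul_eq_mul, map_mul]
    exact Ideal.mul_mem_left _ _ hx

lemma IsLM_monomial {m : ℕ} (β : Fin m →₀ ℕ) :
    IsLM (monomial β (1 : ZMod 2)) β := by
  constructor
  · rw [support_monomial, if_neg one_ne_zero]
    exact Finset.mem_singleton_self β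
  · intro γ hγ
    rw [support_monomial, if_neg one_ne_zero, Finset.mem_singleton] at hγ
    subst hγ
    exact grlexLT_irrefl _

/-- for |I| = |J| = l, the S-polynomial
S(g_I,g_J) = X_{(I∪J)∖I}·g_I - X_{(I∪J)∖J}·g_J reduces to zero modulo G
(its remainder on division by the members of G is zero, i.e. it lies in ⟨G⟩),
and consequently G is a Groebner basis of the ideal it generates. -/
theorem stmt7 (m l : ℕ) (hl : l ≤ m) :
    (∀ I J : Finset (Fin m), I.card = l → J.card = l →
      XI m ((I ∪ J) \ I) * gI m I - XI m ((I ∪ J) \ J) * gI m J ∈ Ideal.span (Gset m l)) ∧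
    IsGroebner (Gset m l) (Ideal.span (Gset m l)) := by
  constructor
  · intro I J hI hJ
    apply Ideal.sub_mem
    · exact Ideal.mul_mem_left _ _ (Ideal.subset_span ⟨I, hI, rfl⟩)
    · exact Ideal.mul_mem_left _ _ (Ideal.subset_span ⟨J, hJ, rfl⟩)
  · constructor
    · exact Ideal.subset_span
    · apply le_antisymm
      · apply Ideal.span_mono
        rintro p ⟨f, hf, α, hα, rfl⟩
        exact ⟨f, Ideal.subset_span hf, α, hα, rfl⟩
      · rw [ltIdeal, Ideal.span_le]
        rintro p ⟨f, hf, α, hα, rfl⟩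
        have hg : phi m f ∈ Ideal.span (Sset m l) := spanG_to_spanS m l hf
        have hlm : IsLM (phi m f) α := IsLM_phi hα
        have hg2 : ∀ β ∈ (phi m f).support, l ≤ β.support.card := span_Sset_le m l hg
        have hcard : l ≤ α.support.card := hg2 α hlm.1
        obtain ⟨I, hIsub, hIcard⟩ := Finset.exists_subset_card_eq hcard
        have hle : ind I ≤ α := ind_le hIsub
        have hsplit : (monomial α (1 : ZMod 2)) = monomial (ind I) 1 * monomial (α - ind I) 1 := by
          rw [monomial_mul, one_mul, add_tsub_cancel_of_le hle]
        rw [hsplit]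
        refine Ideal.mul_mem_right _ _ (Ideal.subset_span ?_)
        refine ⟨gI m I, ⟨I, hIcard, rfl⟩, ind I, ?_, rfl⟩
        rw [gI_eq_phi]
        exact IsLM_phi (IsLM_monomial (ind I))
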